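/- Let L/K be a finite unramified extension of nonarchimedean local fields with Galois group G. Then H¹(G, GL_n(O_L)) is trivial: every 1-cocycle G → GL_n(O_L) is a coboundary. -/

import Mathlib

/-!
STATEMENT 8: Let L/K be a finite unramified extension of nonarchimedean local
fields with Galois group G.  Then H¹(G, GL_n(O_L)) is trivial: every 1-cocycle
G → GL_n(O_L) is a coboundary.
-/

/-- The entrywise action of an automorphism σ of L on GL_n(L). -/
def galAct {K L : Type*} [Field K] [Field L] [Algebra K L] {n : ℕ}
    (σ : L ≃ₐ[K] L) (g : (Matrix (Fin n) (Fin n) L)ˣ) :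
    (Matrix (Fin n) (Fin n) L)ˣ :=
  Units.map (RingEquiv.mapMatrix σ.toRingEquiv :
      Matrix (Fin n) (Fin n) L ≃+* Matrix (Fin n) (Fin n) L).toRingHom.toMonoidHom g

/-- `GL_n(O_L)`: invertible matrices whose entries, and whose inverse's
entries, lie in the valuation ring `O`. -/
def glO {L : Type*} [Field L] (O : ValuationSubring L) {n : ℕ}
    (g : (Matrix (Fin n) (Fin n) L)ˣ) : Prop :=
  (∀ i j, (g : Matrix (Fin n) (Fin n) L) i j ∈ O) ∧
    (∀ i j, ((g⁻¹ : (Matrix (Fin n) (Fin n) L)ˣ) : Matrix (Fin n) (Fin n) L) i j ∈ O)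

open IsLocalRing

section Aux
variable {K L : Type*} [Field K] [Field L] [Algebra K L]
variable (O : ValuationSubring L)

/-- The restriction of `σ` to a ring endomorphism of `O`. -/
def oHom (hGal : ∀ (σ : L ≃ₐ[K] L), ∀ x ∈ O, σ x ∈ O) (σ : L ≃ₐ[K] L) : O →+* O where
  toFun x := ⟨σ x, hGal σ x x.2⟩
  map_one' := Subtype.ext (map_one σ)
  map_mul' x y := Subtype.ext (map_mul σ (x : L) (y : L))
  map_zero' := Subtype.ext (map_zero σ)
  map_add' x y := Subtype.ext (map_add σ (x : L) (y : L))

variable (hGal : ∀ (σ : L ≃ₐ[K] L), ∀ x ∈ O, σ x ∈ O)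

@[simp] lemma oHom_coe (σ : L ≃ₐ[K] L) (x : O) : (oHom O hGal σ x : L) = σ (x : L) := rfl

lemma oHom_oHom (σ τ : L ≃ₐ[K] L) (x : O) :
    oHom O hGal σ (oHom O hGal τ x) = oHom O hGal (σ * τ) x :=
  Subtype.ext (by simp [AlgEquiv.mul_apply])

lemma oHom_one (x : O) : oHom O hGal 1 x = x := Subtype.ext rfl

lemma isLocalHom_oHom (σ : L ≃ₐ[K] L) : IsLocalHom (oHom O hGal σ) := by
  constructor
  intro a h
  have : a = oHom O hGal σ⁻¹ (oHom O hGal σ a) := by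
    rw [oHom_oHom, inv_mul_cancel, oHom_one]
  rw [this]
  exact h.map _

/-- The induced automorphism of the residue field. -/
noncomputable def resO (σ : L ≃ₐ[K] L) : ResidueField O →+* ResidueField O :=
  letI := isLocalHom_oHom O hGal σ
  ResidueField.map (oHom O hGal σ)

lemma resO_residue (σ : L ≃ₐ[K] L) (x : O) :
    resO O hGal σ (residue O x) = residue O (oHom O hGal σ x) := by
  letI := isLocalHom_oHom O hGal σ
  exact ResidueField.map_residue _ x

lemma resO_resO (σ τ : L ≃ₐ[K] L) (z : ResidueField O) :
    resO O hGal σ (resO O hGal τ z) = resO O hGal (σ * τ) z := by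
  obtain ⟨x, rfl⟩ := residue_surjective (R := O) z
  rw [resO_residue, resO_residue, resO_residue, oHom_oHom]

lemma resO_one (z : ResidueField O) : resO O hGal 1 z = z := by
  obtain ⟨x, rfl⟩ := residue_surjective (R := O) z
  rw [resO_residue, oHom_one]

set_option maxHeartbeats 1000000 in
lemma part1 [Finite (ResidueField O)] [IsDiscreteValuationRing O]
    (πO : O) (hπfix : ∀ σ : L ≃ₐ[K] L, σ (πO : L) = (πO : L))
    (hm : maximalIdeal O = Ideal.span {πO})
    (σ : L ≃ₐ[K] L)
    (hσ : ∀ x : O, residue O (oHom O hGal σ x) = residue O x) : σ = 1 := by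
  by_contra hne
  obtain ⟨z, hz⟩ : ∃ z : L, σ z ≠ z := by
    by_contra h
    push_neg at h
    exact hne (AlgEquiv.ext h)
  obtain ⟨a, ha⟩ : ∃ a : O, σ (a : L) ≠ (a : L) := by
    rcases O.mem_or_inv_mem z with hmem | hmem
    · exact ⟨⟨z, hmem⟩, hz⟩
    · refine ⟨⟨z⁻¹, hmem⟩, ?_⟩
      simpa only [map_inv₀] using fun h => hz (inv_injective h)
  set D : O → O := fun x => oHom O hGal σ x - x with hD
  have hDm : ∀ x, D x ∈ maximalIdeal O := by
    intro x
    rw [← residue_eq_zero_iff]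
    simp [hD, hσ x]
  have hirr : Irreducible πO := (IsDiscreteValuationRing.irreducible_iff_uniformizer _).mpr hm
  have hπ0 : πO ≠ 0 := by
    rintro rfl
    exact IsDiscreteValuationRing.not_a_field O (by rw [hm]; simp)
  set J : Ideal O := Ideal.span (Set.range D) with hJdef
  have hJne : J ≠ ⊥ := by
    intro h
    have hmem : D a ∈ J := Ideal.subset_span ⟨a, rfl⟩
    rw [h, Ideal.mem_bot] at hmem
    apply ha
    have := congrArg (fun x : O => (x : L)) hmem
    simpa [hD, sub_eq_zero] using this
  obtain ⟨j, hJ⟩ := IsDiscreteValuationRing.ideal_eq_span_pow_irreducible hJne hirr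
  have hπj : (πO ^ j : O) ≠ 0 := pow_ne_zero _ hπ0
  have hwex : ∀ x : O, ∃ w : O, D x = πO ^ j * w := by
    intro x
    have hx : D x ∈ J := Ideal.subset_span ⟨x, rfl⟩
    rw [hJ, Ideal.mem_span_singleton] at hx
    exact hx
  choose w hw using hwex
  have hx₀ : ∃ x₀ : O, w x₀ ∉ maximalIdeal O := by
    by_contra h
    push_neg at h
    have hle : J ≤ Ideal.span {πO ^ (j + 1)} := by
      rw [hJdef, Ideal.span_le]
      rintro _ ⟨x, rfl⟩
      have hx := h x
      rw [hm, Ideal.mem_span_singleton] at hx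
      obtain ⟨cc, hcc⟩ := hx
      rw [SetLike.mem_coe, Ideal.mem_span_singleton]
      exact ⟨cc, by rw [hw x, hcc]; ring⟩
    have hmem : (πO ^ j : O) ∈ Ideal.span {πO ^ (j + 1)} :=
      hle (by rw [hJ]; exact Ideal.subset_span rfl)
    rw [Ideal.mem_span_singleton] at hmem
    obtain ⟨cc, hcc⟩ := hmem
    have h1 : (1 : O) = πO * cc := by
      apply mul_left_cancel₀ hπj
      calc πO ^ j * 1 = πO ^ (j + 1) * cc := by rw [mul_one, ← hcc]
      _ = πO ^ j * (πO * cc) := by ring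
    exact hirr.not_isUnit (IsUnit.of_mul_eq_one _ h1.symm)
  obtain ⟨x₀, hx₀⟩ := hx₀
  have hwadd : ∀ x y : O, w (x + y) = w x + w y := by
    intro x y
    apply mul_left_cancel₀ hπj
    have e : D (x + y) = D x + D y := by simp only [hD, map_add]; ring
    rw [← hw, e, hw, hw]; ring
  have hwmul : ∀ x y : O, w (x * y) = oHom O hGal σ x * w y + w x * y := by
    intro x y
    apply mul_left_cancel₀ hπj
    have e : D (x * y) = oHom O hGal σ x * D y + D x * y := by
      simp only [hD, map_mul]; ring
    rw [← hw, e, hw, hw]; ring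
  have hπOfix : oHom O hGal σ πO = πO := Subtype.ext (hπfix σ)
  have hwπ : ∀ x : O, w (πO * x) = πO * w x := by
    intro x
    apply mul_left_cancel₀ hπj
    have e : D (πO * x) = πO * D x := by
      simp only [hD, map_mul, hπOfix]; ring
    rw [← hw, e, hw]; ring
  set k := ResidueField O
  set r : O →+* k := residue O with hr
  set φ : O → k := fun x => r (w x) with hφ
  have hφπ : ∀ x : O, φ (πO * x) = 0 := by
    intro x
    have hπm : r πO = 0 := by
      rw [hr, residue_eq_zero_iff, hm]
      exact Ideal.subset_span rfl
    show r (w (πO * x)) = 0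
    rw [hwπ, map_mul, hπm, zero_mul]
  have hφadd : ∀ x y : O, φ (x + y) = φ x + φ y := by
    intro x y
    show r (w (x + y)) = r (w x) + r (w y)
    rw [hwadd, map_add]
  have hφpow : ∀ (m : ℕ) (y : O), φ (y ^ (m + 1)) = (m + 1 : k) * (r y) ^ m * φ y := by
    intro m
    induction m with
    | zero => intro y; simp
    | succ m ih =>
      intro y
      have e : y ^ (m + 2) = y * y ^ (m + 1) := by ring
      have hry : r (y ^ (m + 1)) = (r y) ^ (m + 1) := map_pow _ _ _
      show r (w (y ^ (m + 2))) = _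
      rw [e, hwmul, map_add, map_mul, map_mul, hσ y]
      have ih' : r (w (y ^ (m + 1))) = (m + 1 : k) * (r y) ^ m * φ y := ih y
      rw [ih', hry]
      show (r y) * ((m + 1 : k) * (r y) ^ m * r (w y)) + r (w y) * (r y) ^ (m + 1)
        = ((m + 1 : ℕ) + 1 : k) * (r y) ^ (m + 1) * r (w y)
      push_cast
      ring
  haveI : Fintype k := Fintype.ofFinite k
  set p := ringChar k with hpdef
  haveI : CharP k p := ringChar.charP k
  have hp : p.Prime := CharP.char_is_prime k p
  haveI : Fact p.Prime := ⟨hp⟩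
  have hfrob : Function.Surjective (fun t : k => t ^ p) := by
    have hinj : Function.Injective (fun t : k => t ^ p) := by
      intro s t h
      have h1 : (s - t) ^ p = 0 := by
        rw [sub_pow_char]
        simpa using sub_eq_zero.mpr h
      exact sub_eq_zero.mp (pow_eq_zero_iff hp.ne_zero |>.mp h1)
    exact Finite.surjective_of_injective hinj
  obtain ⟨b, hb⟩ := hfrob (r x₀)
  obtain ⟨y, rfl⟩ := residue_surjective (R := O) b
  have hyp : r (y ^ p) = r x₀ := by rw [map_pow]; exact hb
  have hdiff : x₀ - y ^ p ∈ maximalIdeal O := by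
    rw [← residue_eq_zero_iff]
    show r (x₀ - y ^ p) = 0
    rw [map_sub, hyp, sub_self]
  rw [hm, Ideal.mem_span_singleton] at hdiff
  obtain ⟨cc, hcc⟩ := hdiff
  have hx₀eq : x₀ = y ^ p + πO * cc := by rw [← hcc]; ring
  have hφx₀ : φ x₀ = 0 := by
    rw [hx₀eq, hφadd, hφπ, add_zero]
    obtain ⟨m, hm'⟩ : ∃ m, p = m + 1 := ⟨p - 1, (Nat.succ_pred_eq_of_pos hp.pos).symm⟩
    rw [hm', hφpow]
    have hcast : ((m : k) + 1) = ((p : ℕ) : k) := by rw [hm']; push_cast; ring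
    rw [hcast, CharP.cast_eq_zero k p]
    ring
  apply hx₀
  rw [← residue_eq_zero_iff]
  exact hφx₀

lemma resO_inj [Finite (ResidueField O)] [IsDiscreteValuationRing O]
    (πO : O) (hπfix : ∀ σ : L ≃ₐ[K] L, σ (πO : L) = (πO : L))
    (hm : maximalIdeal O = Ideal.span {πO})
    (σ τ : L ≃ₐ[K] L) (h : ∀ z, resO O hGal σ z = resO O hGal τ z) : σ = τ := by
  have key : ∀ x : O, residue O (oHom O hGal (σ * τ⁻¹) x) = residue O x := by
    intro x
    have h1 : residue O (oHom O hGal σ (oHom O hGal τ⁻¹ x))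
        = residue O (oHom O hGal τ (oHom O hGal τ⁻¹ x)) := by
      calc residue O (oHom O hGal σ (oHom O hGal τ⁻¹ x))
          = resO O hGal σ (residue O (oHom O hGal τ⁻¹ x)) :=
            (resO_residue O hGal σ _).symm
        _ = resO O hGal τ (residue O (oHom O hGal τ⁻¹ x)) := h _
        _ = residue O (oHom O hGal τ (oHom O hGal τ⁻¹ x)) := resO_residue O hGal τ _
    rw [← oHom_oHom, h1, oHom_oHom, mul_inv_cancel, oHom_one]
  have := part1 O hGal πO hπfix hm (σ * τ⁻¹) key
  rwa [mul_inv_eq_one] at this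

lemma indepRes [Finite (ResidueField O)] [IsDiscreteValuationRing O]
    (πO : O) (hπfix : ∀ σ : L ≃ₐ[K] L, σ (πO : L) = (πO : L))
    (hm : maximalIdeal O = Ideal.span {πO}) :
    LinearIndependent (ResidueField O)
      (fun σ : (L ≃ₐ[K] L) => ⇑(resO O hGal σ)) := by
  have h := (linearIndependent_monoidHom (ResidueField O) (ResidueField O)).comp
    (fun σ : (L ≃ₐ[K] L) => (resO O hGal σ).toMonoidHom)
    (fun σ τ hst => by
      apply resO_inj O hGal πO hπfix hm
      intro z
      exact congrFun (congrArg (fun f : (ResidueField O) →* (ResidueField O) => ⇑f) hst) z)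
  exact h

lemma part2 [FiniteDimensional K L] [Finite (ResidueField O)] [IsDiscreteValuationRing O]
    (πO : O) (hπfix : ∀ σ : L ≃ₐ[K] L, σ (πO : L) = (πO : L))
    (hm : maximalIdeal O = Ideal.span {πO}) :
    ∃ θ : O, (∑ σ : L ≃ₐ[K] L, resO O hGal σ (residue O θ)) ≠ 0 := by
  by_contra h
  push_neg at h
  have hall : ∀ z : ResidueField O, (∑ σ : L ≃ₐ[K] L, resO O hGal σ z) = 0 := by
    intro z
    obtain ⟨θ, rfl⟩ := residue_surjective (R := O) z
    exact h θ
  have hli := indepRes O hGal πO hπfix hm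
  have h1 := Fintype.linearIndependent_iff.mp hli (fun _ => 1) ?_ 1
  · exact one_ne_zero h1
  · funext z
    simpa using hall z

set_option maxHeartbeats 1000000 in
lemma part3 [FiniteDimensional K L] {n : ℕ}
    (hli : LinearIndependent (ResidueField O) (fun σ : (L ≃ₐ[K] L) => ⇑(resO O hGal σ)))
    (Ab : (L ≃ₐ[K] L) → Matrix (Fin n) (Fin n) (ResidueField O))
    (hU : ∀ σ, IsUnit (Ab σ))
    (hcoc : ∀ σ τ, Ab (σ * τ) = Ab σ * (Ab τ).map (resO O hGal σ)) :
    ∃ b : Matrix (Fin n) (Fin n) (ResidueField O), IsUnit b ∧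
      ∀ σ, Ab σ * (b.map (resO O hGal σ)) = b := by
  classical
  have hA1 : Ab 1 = 1 := by
    have h1 := hcoc 1 1
    have hmapid : (Ab 1).map (resO O hGal 1) = Ab 1 := by
      ext i j; simp [Matrix.map_apply, resO_one]
    rw [one_mul, hmapid] at h1
    exact ((hU 1).mul_left_cancel (a := Ab 1) (by rw [mul_one, ← h1])).symm
  set ρ : (L ≃ₐ[K] L) → (Fin n → (ResidueField O)) → (Fin n → (ResidueField O)) :=
    fun σ v => (Ab σ).mulVec (fun i => resO O hGal σ (v i)) with hρ
  have hρadd : ∀ σ u v, ρ σ (u + v) = ρ σ u + ρ σ v := by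
    intro σ u v
    show (Ab σ).mulVec _ = _
    have e : (fun i => resO O hGal σ ((u + v) i))
        = (fun i => resO O hGal σ (u i)) + (fun i => resO O hGal σ (v i)) :=
      funext fun i => map_add _ _ _
    rw [e, Matrix.mulVec_add]
  have hρsmul : ∀ σ (t : (ResidueField O)) v, ρ σ (t • v) = resO O hGal σ t • ρ σ v := by
    intro σ t v
    show (Ab σ).mulVec _ = _
    have e : (fun i => resO O hGal σ ((t • v) i))
        = resO O hGal σ t • (fun i => resO O hGal σ (v i)) :=
      funext fun i => map_mul _ _ _
    rw [e, Matrix.mulVec_smul]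
  have hmapvec : ∀ (σ : L ≃ₐ[K] L) (B : Matrix (Fin n) (Fin n) (ResidueField O)) (v : Fin n → (ResidueField O)),
      (fun i => resO O hGal σ ((B.mulVec v) i))
        = (B.map (resO O hGal σ)).mulVec (fun i => resO O hGal σ (v i)) := by
    intro σ B v
    funext i
    simp [Matrix.mulVec, dotProduct, map_sum, Matrix.map_apply]
  have hρcomp : ∀ σ τ v, ρ σ (ρ τ v) = ρ (σ * τ) v := by
    intro σ τ v
    show (Ab σ).mulVec _ = _
    rw [hmapvec σ (Ab τ), Matrix.mulVec_mulVec, ← hcoc]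
    have e : (fun i => resO O hGal σ (resO O hGal τ (v i)))
        = fun i => resO O hGal (σ * τ) (v i) :=
      funext fun i => resO_resO O hGal σ τ (v i)
    rw [e]
  have hρone : ∀ v, ρ 1 v = v := by
    intro v
    show (Ab 1).mulVec _ = v
    have e : (fun i => resO O hGal 1 (v i)) = v := funext fun i => resO_one O hGal (v i)
    rw [hA1, e, Matrix.one_mulVec]
  set Mset : Set (Fin n → (ResidueField O)) := {v | ∀ σ, ρ σ v = v} with hMset
  have hspan : ⊤ ≤ Submodule.span (ResidueField O) Mset := by
    intro v _
    set wf : (ResidueField O) → (Fin n → (ResidueField O)) := fun lam => ∑ σ, resO O hGal σ lam • ρ σ v with hwf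
    have hwM : ∀ lam, wf lam ∈ Mset := by
      intro lam
      show ∀ τ, ρ τ (wf lam) = wf lam
      intro τ
      have e1 : ρ τ (wf lam) = ∑ σ, resO O hGal (τ * σ) lam • ρ (τ * σ) v := by
        rw [hwf]
        calc ρ τ (∑ σ, resO O hGal σ lam • ρ σ v)
            = AddMonoidHom.mk' (ρ τ) (hρadd τ) (∑ σ, resO O hGal σ lam • ρ σ v) := rfl
          _ = ∑ σ, AddMonoidHom.mk' (ρ τ) (hρadd τ) (resO O hGal σ lam • ρ σ v) :=
              map_sum _ _ _
          _ = ∑ σ, resO O hGal (τ * σ) lam • ρ (τ * σ) v := by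
              apply Finset.sum_congr rfl
              intro σ _
              show ρ τ (resO O hGal σ lam • ρ σ v) = _
              rw [hρsmul, hρcomp, resO_resO]
      rw [e1, hwf]
      exact Fintype.sum_equiv (Equiv.mulLeft τ)
        (fun σ => resO O hGal (τ * σ) lam • ρ (τ * σ) v)
        (fun σ => resO O hGal σ lam • ρ σ v)
        (fun σ => by simp)
    set row : (ResidueField O) → ((L ≃ₐ[K] L) → (ResidueField O)) := fun lam σ => resO O hGal σ lam with hrow
    set S : Submodule (ResidueField O) ((L ≃ₐ[K] L) → (ResidueField O)) := Submodule.span (ResidueField O) (Set.range row) with hSdef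
    have hS : S = ⊤ := by
      by_contra hne
      obtain ⟨x, hx⟩ : ∃ x, x ∉ S := by
        by_contra hall
        push_neg at hall
        exact hne (Submodule.eq_top_iff'.mpr hall)
      have hxq : S.mkQ x ≠ 0 := by
        intro h0
        apply hx
        rwa [Submodule.mkQ_apply, Submodule.Quotient.mk_eq_zero] at h0
      obtain ⟨φf, hφf⟩ : ∃ φf : Module.Dual (ResidueField O) (((L ≃ₐ[K] L) → (ResidueField O)) ⧸ S), φf (S.mkQ x) ≠ 0 := by
        by_contra hno
        push_neg at hno
        exact hxq ((Module.forall_dual_apply_eq_zero_iff (ResidueField O) (S.mkQ x)).mp hno)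
      set f : ((L ≃ₐ[K] L) → (ResidueField O)) →ₗ[(ResidueField O)] (ResidueField O) := φf.comp S.mkQ with hf
      have hfS : ∀ s ∈ S, f s = 0 := by
        intro s hs
        have h0 : S.mkQ s = 0 := by rwa [Submodule.mkQ_apply, Submodule.Quotient.mk_eq_zero]
        rw [hf]
        simp [LinearMap.comp_apply, h0]
      set μ : (L ≃ₐ[K] L) → (ResidueField O) := fun σ => f (fun j => if σ = j then 1 else 0) with hμ
      have hdecomp : ∀ xx : (L ≃ₐ[K] L) → (ResidueField O), f xx = ∑ σ, xx σ * μ σ := by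
        intro xx
        conv_lhs => rw [pi_eq_sum_univ xx]
        rw [map_sum]
        apply Finset.sum_congr rfl
        intro σ _
        rw [map_smul, smul_eq_mul, hμ]
      have hμ0 : ∀ lam, ∑ σ, resO O hGal σ lam * μ σ = 0 := by
        intro lam
        have h0 : f (row lam) = 0 := hfS _ (Submodule.subset_span ⟨lam, rfl⟩)
        rw [hdecomp] at h0
        exact h0
      have hμne : μ ≠ 0 := by
        intro h0
        apply hφf
        have hfx : f x = 0 := by rw [hdecomp, h0]; simp
        rw [hf] at hfx
        simpa using hfx
      have hzero := Fintype.linearIndependent_iff.mp hli μ ?_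
      · exact hμne (funext hzero)
      · funext lam
        have e2 : (∑ σ, μ σ • ⇑(resO O hGal σ)) lam = ∑ σ, μ σ * resO O hGal σ lam := by
          simp [Finset.sum_apply]
        rw [e2, Finset.sum_congr rfl (fun σ _ => mul_comm (μ σ) _)]
        exact hμ0 lam
    have hδ : (fun σ : L ≃ₐ[K] L => if (1 : L ≃ₐ[K] L) = σ then (1 : (ResidueField O)) else 0)
        ∈ Submodule.span (ResidueField O) (Set.range row) := by
      rw [← hSdef, hS]; trivial
    rw [Finsupp.mem_span_range_iff_exists_finsupp] at hδ
    obtain ⟨cf, hcf⟩ := hδ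
    have hv : v = cf.sum fun lam t => t • wf lam := by
      have e1 : (cf.sum fun lam t => t • wf lam)
          = ∑ σ, (∑ lam ∈ cf.support, cf lam * resO O hGal σ lam) • ρ σ v := by
        rw [Finsupp.sum]
        have e2 : ∀ lam ∈ cf.support, cf lam • wf lam
            = ∑ σ, (cf lam * resO O hGal σ lam) • ρ σ v := by
          intro lam _
          rw [hwf, Finset.smul_sum]
          exact Finset.sum_congr rfl fun σ _ => (smul_smul _ _ _)
        rw [Finset.sum_congr rfl e2, Finset.sum_comm]
        exact Finset.sum_congr rfl fun σ _ => (Finset.sum_smul).symm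
      have e3 : ∀ σ, (∑ lam ∈ cf.support, cf lam * resO O hGal σ lam)
          = if (1 : L ≃ₐ[K] L) = σ then (1 : (ResidueField O)) else 0 := by
        intro σ
        have h5 := congrFun hcf σ
        rw [Finsupp.sum] at h5
        rw [Finset.sum_apply] at h5
        simp only [Pi.smul_apply, smul_eq_mul, hrow] at h5
        exact h5
      rw [e1, Finset.sum_congr rfl (fun σ _ => by rw [e3 σ])]
      have e4 : ∑ σ : L ≃ₐ[K] L, (if (1 : L ≃ₐ[K] L) = σ then (1 : (ResidueField O)) else 0) • ρ σ v
          = ρ 1 v := by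
        rw [Finset.sum_eq_single (1 : L ≃ₐ[K] L)]
        · simp
        · intro σ _ hσne
          rw [if_neg (fun h => hσne h.symm), zero_smul]
        · intro habs
          exact absurd (Finset.mem_univ _) habs
      rw [e4, hρone]
    rw [hv, Finsupp.sum]
    apply Submodule.sum_mem
    intro lam _
    exact Submodule.smul_mem _ _ (Submodule.subset_span (hwM lam))
  -- extract a basis made of fixed vectors
  obtain ⟨bs, hbsub, hbspan, hbli⟩ := exists_linearIndependent (ResidueField O) Mset
  have hbtop : Submodule.span (ResidueField O) bs = ⊤ := by
    rw [hbspan]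
    exact le_antisymm le_top hspan
  haveI : Fintype bs := (hbli.setFinite).fintype
  set B : Module.Basis bs (ResidueField O) (Fin n → (ResidueField O)) :=
    Module.Basis.mk hbli (by rw [Subtype.range_coe, hbtop]) with hB
  have hcard : Fintype.card bs = n := by
    rw [← Module.finrank_eq_card_basis B, Module.finrank_fin_fun]
  set e : bs ≃ Fin n := Fintype.equivFinOfCardEq hcard with he
  set B' : Module.Basis (Fin n) (ResidueField O) (Fin n → (ResidueField O)) := B.reindex e with hB'
  set std : Module.Basis (Fin n) (ResidueField O) (Fin n → (ResidueField O)) := Pi.basisFun (ResidueField O) (Fin n) with hstd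
  set b : Matrix (Fin n) (Fin n) (ResidueField O) := std.toMatrix ⇑B' with hb
  haveI : Invertible b := std.invertibleToMatrix B'
  have hbunit : IsUnit b := isUnit_of_invertible b
  have hcol : ∀ j, (fun i => b i j) = ⇑B' j := by
    intro j
    funext i
    rw [hb, hstd, Module.Basis.toMatrix_apply, Pi.basisFun_repr]
  have hcolM : ∀ j, (⇑B' j : Fin n → (ResidueField O)) ∈ Mset := by
    intro j
    rw [hB', Module.Basis.reindex_apply, hB, Module.Basis.coe_mk]
    exact hbsub (e.symm j).2
  refine ⟨b, hbunit, ?_⟩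
  intro σ
  ext i j
  have hfix := hcolM j σ
  have lhs : (Ab σ * b.map (resO O hGal σ)) i j = (ρ σ (fun i' => b i' j)) i := by
    rw [hρ]
    simp [Matrix.mul_apply, Matrix.mulVec, dotProduct, Matrix.map_apply]
  rw [lhs, hcol j, hfix, ← hcol j]

end Aux

set_option maxHeartbeats 1600000 in
theorem stmt8 {K L : Type*} [Field K] [Field L] [Algebra K L]
    [FiniteDimensional K L] [IsGalois K L]
    (O : ValuationSubring L) [IsDiscreteValuationRing O]
    [Finite (IsLocalRing.ResidueField O)]
    (hGal : ∀ (σ : L ≃ₐ[K] L), ∀ x ∈ O, σ x ∈ O)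
    (π₀ : K)
    -- unramifiedness: the maximal ideal of O is generated by π₀ ∈ K
    (hπ : ∀ x : L, (x ∈ O ∧ ∀ y ∈ O, x * y ≠ 1) ↔
        ∃ y ∈ O, x = algebraMap K L π₀ * y)
    (n : ℕ) :
    ∀ c : (L ≃ₐ[K] L) → (Matrix (Fin n) (Fin n) L)ˣ,
      (∀ σ, glO O (c σ)) →
      (∀ σ τ : L ≃ₐ[K] L, c (σ * τ) = c σ * galAct σ (c τ)) →
      ∃ u : (Matrix (Fin n) (Fin n) L)ˣ, glO O u ∧
        ∀ σ : L ≃ₐ[K] L, c σ = u * (galAct σ u)⁻¹ := by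
  intro c hc hcoc
  classical
  -- the uniformizer
  have hπbasic := (hπ (algebraMap K L π₀)).mpr ⟨1, O.one_mem, (mul_one _).symm⟩
  set πO : O := ⟨algebraMap K L π₀, hπbasic.1⟩ with hπO
  have hπnonunit : ∀ y ∈ O, (algebraMap K L π₀) * y ≠ 1 := hπbasic.2
  have hπfix : ∀ σ : L ≃ₐ[K] L, σ (πO : L) = (πO : L) := fun σ => σ.commutes π₀
  have hm : maximalIdeal O = Ideal.span {πO} := by
    ext x
    rw [mem_maximalIdeal, mem_nonunits_iff, Ideal.mem_span_singleton]
    constructor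
    · intro hnu
      have hne : ∀ y ∈ O, (x : L) * y ≠ 1 := by
        intro y hy hxy
        exact hnu (IsUnit.of_mul_eq_one (a := x) ⟨y, hy⟩ (Subtype.ext hxy))
      obtain ⟨y, hy, hxy⟩ := (hπ (x : L)).mp ⟨x.2, hne⟩
      exact ⟨⟨y, hy⟩, Subtype.ext hxy⟩
    · rintro ⟨cc, rfl⟩ hu
      obtain ⟨d, hd⟩ := IsUnit.exists_right_inv hu
      apply hπnonunit ((cc : L) * (d : L)) (O.mul_mem _ _ cc.2 d.2)
      have := congrArg (fun z : O => (z : L)) hd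
      push_cast at this
      rw [← this]
      ring
  -- matrices over O
  set ι : O →+* L := O.subtype with hι
  set ιM : Matrix (Fin n) (Fin n) O →+* Matrix (Fin n) (Fin n) L := ι.mapMatrix with hιM
  have hιMinj : Function.Injective ιM := by
    intro X Y h
    ext i j
    have h2 : ιM X i j = ιM Y i j := by rw [h]
    rw [hιM, RingHom.mapMatrix_apply, RingHom.mapMatrix_apply] at h2
    exact h2
  set A : (L ≃ₐ[K] L) → Matrix (Fin n) (Fin n) O :=
    fun σ => Matrix.of fun i j => (⟨(c σ : Matrix (Fin n) (Fin n) L) i j, (hc σ).1 i j⟩ : O)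
    with hA
  set Bi : (L ≃ₐ[K] L) → Matrix (Fin n) (Fin n) O :=
    fun σ => Matrix.of fun i j =>
      (⟨((c σ)⁻¹ : (Matrix (Fin n) (Fin n) L)ˣ).val i j, (hc σ).2 i j⟩ : O) with hBi
  have hAcoe : ∀ σ, ιM (A σ) = (c σ : Matrix (Fin n) (Fin n) L) := by
    intro σ; ext i j; rfl
  have hBcoe : ∀ σ, ιM (Bi σ) = ((c σ)⁻¹ : (Matrix (Fin n) (Fin n) L)ˣ).val := by
    intro σ; ext i j; rfl
  have hAB : ∀ σ, A σ * Bi σ = 1 := by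
    intro σ
    apply hιMinj
    rw [map_mul, map_one, hAcoe, hBcoe]
    exact (c σ).mul_inv
  have hBA : ∀ σ, Bi σ * A σ = 1 := by
    intro σ
    apply hιMinj
    rw [map_mul, map_one, hAcoe, hBcoe]
    exact (c σ).inv_mul
  -- the coercion of `galAct`
  have hgalcoe : ∀ (σ : L ≃ₐ[K] L) (g : (Matrix (Fin n) (Fin n) L)ˣ),
      ((galAct σ g : (Matrix (Fin n) (Fin n) L)ˣ) : Matrix (Fin n) (Fin n) L)
        = (g : Matrix (Fin n) (Fin n) L).map ⇑σ := by
    intro σ g; rfl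
  -- transfer the cocycle identity to O
  have hιMcomm : ∀ (σ : L ≃ₐ[K] L) (X : Matrix (Fin n) (Fin n) O),
      ιM ((oHom O hGal σ).mapMatrix X) = (ιM X).map ⇑σ := by
    intro σ X; ext i j; rfl
  have hAcocO : ∀ σ τ, A (σ * τ) = A σ * (oHom O hGal σ).mapMatrix (A τ) := by
    intro σ τ
    apply hιMinj
    rw [map_mul, hιMcomm, hAcoe, hAcoe, hAcoe, ← hgalcoe]
    have := congrArg (fun u : (Matrix (Fin n) (Fin n) L)ˣ => u.val) (hcoc σ τ)
    simpa using this
  -- reductions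
  set rr : O →+* ResidueField O := residue O with hrr
  set Ab : (L ≃ₐ[K] L) → Matrix (Fin n) (Fin n) (ResidueField O) :=
    fun σ => rr.mapMatrix (A σ) with hAb
  have hAbap : ∀ σ, Ab σ = rr.mapMatrix (A σ) := fun σ => by rw [hAb]
  have hUres : ∀ σ, IsUnit (Ab σ) := by
    intro σ
    refine ⟨⟨Ab σ, rr.mapMatrix (Bi σ), ?_, ?_⟩, rfl⟩
    · rw [hAb, ← map_mul, hAB, map_one]
    · rw [hAb, ← map_mul, hBA, map_one]
  have hmapmap : ∀ (σ : L ≃ₐ[K] L) (X : Matrix (Fin n) (Fin n) O),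
      rr.mapMatrix ((oHom O hGal σ).mapMatrix X)
        = (rr.mapMatrix X).map (resO O hGal σ) := by
    intro σ X
    ext i j
    show residue O (oHom O hGal σ (X i j)) = resO O hGal σ (residue O (X i j))
    exact (resO_residue O hGal σ (X i j)).symm
  have hrescoc : ∀ σ τ, Ab (σ * τ) = Ab σ * (Ab τ).map (resO O hGal σ) := by
    intro σ τ
    rw [hAbap, hAbap, hAbap, hAcocO, map_mul, hmapmap]
  -- residue-level data
  obtain ⟨θ, hθ⟩ := part2 O hGal πO hπfix hm
  obtain ⟨b, hbU, hbfix⟩ := part3 O hGal (indepRes O hGal πO hπfix hm) Ab hUres hrescoc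
  -- lift b to O
  have hlift : ∀ i j, ∃ y : O, rr y = b i j := fun i j => residue_surjective (b i j)
  choose aM haM using hlift
  set a : Matrix (Fin n) (Fin n) O := Matrix.of aM with ha
  set u₀ : Matrix (Fin n) (Fin n) O :=
    ∑ σ : L ≃ₐ[K] L, A σ * (oHom O hGal σ).mapMatrix (θ • a) with hu₀
  have hmapcomp : ∀ (τ σ : L ≃ₐ[K] L) (X : Matrix (Fin n) (Fin n) O),
      (oHom O hGal τ).mapMatrix ((oHom O hGal σ).mapMatrix X)
        = (oHom O hGal (τ * σ)).mapMatrix X := by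
    intro τ σ X
    ext i j
    simp only [RingHom.mapMatrix_apply, Matrix.map_apply]
    rw [oHom_oHom]
  have hfixO : ∀ τ, A τ * (oHom O hGal τ).mapMatrix u₀ = u₀ := by
    intro τ
    rw [hu₀, map_sum, Finset.mul_sum]
    have e1 : ∀ σ : L ≃ₐ[K] L,
        A τ * ((oHom O hGal τ).mapMatrix (A σ * (oHom O hGal σ).mapMatrix (θ • a)))
          = A (τ * σ) * (oHom O hGal (τ * σ)).mapMatrix (θ • a) := by
      intro σ
      rw [map_mul, hmapcomp, ← mul_assoc, ← hAcocO]
    rw [Finset.sum_congr rfl (fun σ _ => e1 σ)]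
    exact Fintype.sum_equiv (Equiv.mulLeft τ)
      (fun σ => A (τ * σ) * (oHom O hGal (τ * σ)).mapMatrix (θ • a))
      (fun σ => A σ * (oHom O hGal σ).mapMatrix (θ • a))
      (fun σ => by simp)
  -- reduction of u₀ is invertible
  have hresa : rr.mapMatrix (θ • a) = rr θ • b := by
    ext i j
    rw [RingHom.mapMatrix_apply, Matrix.map_apply, Matrix.smul_apply, Matrix.smul_apply,
      smul_eq_mul, map_mul, smul_eq_mul, ha]
    congr 1
    exact haM i j
  have hsmulmap : ∀ (σ : L ≃ₐ[K] L) (t : ResidueField O)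
      (X : Matrix (Fin n) (Fin n) (ResidueField O)),
      (t • X).map (resO O hGal σ) = resO O hGal σ t • X.map (resO O hGal σ) := by
    intro σ t X
    ext i j
    rw [Matrix.map_apply, Matrix.smul_apply, Matrix.smul_apply, smul_eq_mul, smul_eq_mul,
      map_mul, Matrix.map_apply]
  have hresu₀ : rr.mapMatrix u₀ = (∑ σ : L ≃ₐ[K] L, resO O hGal σ (rr θ)) • b := by
    rw [hu₀, map_sum]
    have e1 : ∀ σ : L ≃ₐ[K] L,
        rr.mapMatrix (A σ * (oHom O hGal σ).mapMatrix (θ • a))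
          = resO O hGal σ (rr θ) • b := by
      intro σ
      rw [map_mul, hmapmap, hresa, hsmulmap, Matrix.mul_smul, ← hAbap σ, hbfix]
    rw [Finset.sum_congr rfl (fun σ _ => e1 σ), ← Finset.sum_smul]
  have hdetne : rr u₀.det ≠ 0 := by
    rw [RingHom.map_det, hresu₀, Matrix.det_smul]
    apply mul_ne_zero
    · exact pow_ne_zero _ hθ
    · exact ((Matrix.isUnit_iff_isUnit_det b).mp hbU).ne_zero
  have huunit : IsUnit u₀ := by
    rw [Matrix.isUnit_iff_isUnit_det]
    by_contra hnu
    exact hdetne ((residue_eq_zero_iff _).mpr (mem_maximalIdeal _ |>.mpr (mem_nonunits_iff.mpr hnu)))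
  set U : (Matrix (Fin n) (Fin n) O)ˣ := huunit.unit with hUdef
  have hUval : (U : Matrix (Fin n) (Fin n) O) = u₀ := huunit.unit_spec
  set uu : (Matrix (Fin n) (Fin n) L)ˣ := Units.map ιM.toMonoidHom U with huu
  have huuval : (uu : Matrix (Fin n) (Fin n) L) = ιM u₀ := by
    rw [huu, Units.coe_map, hUval]; rfl
  refine ⟨uu, ⟨?_, ?_⟩, ?_⟩
  · intro i j
    rw [huuval]
    exact ((u₀ i j) : O).2
  · intro i j
    have : (uu⁻¹ : (Matrix (Fin n) (Fin n) L)ˣ) = Units.map ιM.toMonoidHom U⁻¹ := by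
      rw [huu, ← map_inv]
    rw [this, Units.coe_map]
    exact (((U⁻¹ : (Matrix (Fin n) (Fin n) O)ˣ).val) i j).2
  · intro σ
    rw [eq_mul_inv_iff_mul_eq]
    apply Units.ext
    rw [Units.val_mul, hgalcoe, huuval, ← hιMcomm, ← hAcoe, ← map_mul, hfixO]
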